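/- Fix a constant q ∈ (0, 1) and a probability measure ν on (S, B), and define the exponential smoothing strategy σ by σ_0 = ν and σ_n(x) = q^n ν + (1 − q) Σ_{i=1}^n q^{n−i} δ_{x_i} for all n ≥ 1 and x ∈ S^n. Then the coordinate process X is conditionally identically distributed (c.i.d.) under P_σ. -/

import Mathlib

open MeasureTheory ProbabilityTheory
open scoped ENNReal

namespace PredictiveBayes

variable {S : Type*} [MeasurableSpace S]

/-- The finite-dimensional distributions determined by a strategy `κ`. -/
noncomputable def stratFDD (κ : ∀ n, Kernel (Fin n → S) S) : ∀ n, Measure (Fin n → S)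
  | 0 => Measure.dirac (fun i : Fin 0 => i.elim0)
  | n + 1 => (stratFDD κ n).bind (fun x => ((κ n) x).map (Fin.snoc x))

/-- `P` is the Ionescu–Tulcea law `P_κ` of the strategy `κ`. -/
def IsStrategyLaw (κ : ∀ n, Kernel (Fin n → S) S) (P : Measure (ℕ → S)) : Prop :=
  ∀ n, P.map (fun ω (i : Fin n) => ω i) = stratFDD κ n

/-- The process `Y` is conditionally identically distributed (c.i.d.) under `P`. -/
def CID {Ω : Type*} [MeasurableSpace Ω] (P : Measure Ω) (Y : ℕ → Ω → S) : Prop :=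
  P.map (Y 1) = P.map (Y 0) ∧
  ∀ n m : ℕ, 1 ≤ n → n ≤ m → ∀ A : Set S, MeasurableSet A →
    (P[Set.indicator ((Y m) ⁻¹' A) (fun _ => (1 : ℝ)) |
        MeasurableSpace.comap (fun ω (i : Fin n) => Y i ω) inferInstance])
      =ᵐ[P]
    (P[Set.indicator ((Y n) ⁻¹' A) (fun _ => (1 : ℝ)) |
        MeasurableSpace.comap (fun ω (i : Fin n) => Y i ω) inferInstance])

set_option linter.unusedSectionVars false


lemma measurable_snoc_uncurry (n : ℕ) :
    Measurable (fun p : (Fin n → S) × S => (Fin.snoc p.1 p.2 : Fin (n+1) → S)) := by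
  refine measurable_pi_iff.mpr fun i => ?_
  refine Fin.lastCases ?_ ?_ i
  · simpa using measurable_snd
  · intro j
    simpa using (show Measurable fun p : (Fin n → S) × S => p.1 j from (measurable_pi_apply j).comp measurable_fst)

lemma measurable_snoc_left {n : ℕ} (x : Fin n → S) :
    Measurable (fun y : S => (Fin.snoc x y : Fin (n+1) → S)) :=
  (measurable_snoc_uncurry n).comp measurable_prodMk_left

lemma measurable_snocFamily {n : ℕ} (κ : Kernel (Fin n → S) S) [IsSFiniteKernel κ] :
    Measurable (fun x => ((κ x).map (Fin.snoc x) : Measure (Fin (n+1) → S))) := by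
  refine Measure.measurable_measure.mpr fun s hs => ?_
  have h1 : ∀ x, ((κ x).map (Fin.snoc x)) s = κ x (Prod.mk x ⁻¹' ((fun p : (Fin n → S) × S => (Fin.snoc p.1 p.2 : Fin (n+1) → S)) ⁻¹' s)) := by
    intro x
    rw [Measure.map_apply (measurable_snoc_left x) hs]
    rfl
  simp_rw [h1]
  exact Kernel.measurable_kernel_prodMk_left ((measurable_snoc_uncurry n) hs)

lemma lintegral_stratFDD_succ (κ : ∀ n, Kernel (Fin n → S) S) [∀ n, IsSFiniteKernel (κ n)] (n : ℕ)
    {f : (Fin (n+1) → S) → ℝ≥0∞} (hf : Measurable f) :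
    ∫⁻ y, f y ∂stratFDD κ (n+1) = ∫⁻ x, ∫⁻ s, f (Fin.snoc x s) ∂(κ n x) ∂stratFDD κ n := by
  rw [show stratFDD κ (n+1) = (stratFDD κ n).bind (fun x => ((κ n) x).map (Fin.snoc x)) from rfl,
    Measure.lintegral_bind (measurable_snocFamily _).aemeasurable hf.aemeasurable]
  exact lintegral_congr fun x => lintegral_map hf (measurable_snoc_left x)

lemma stratFDD_succ_apply (κ : ∀ n, Kernel (Fin n → S) S) [∀ n, IsSFiniteKernel (κ n)] (n : ℕ)
    {E : Set (Fin (n+1) → S)} (hE : MeasurableSet E) :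
    stratFDD κ (n+1) E = ∫⁻ x, κ n x ((fun y => (Fin.snoc x y : Fin (n+1) → S)) ⁻¹' E) ∂stratFDD κ n := by
  rw [show stratFDD κ (n+1) = (stratFDD κ n).bind (fun x => ((κ n) x).map (Fin.snoc x)) from rfl,
    Measure.bind_apply hE (measurable_snocFamily _).aemeasurable]
  exact lintegral_congr fun x => Measure.map_apply (measurable_snoc_left x) hE




section Key
variable (q : ℝ) (hq : q ∈ Set.Ioo (0 : ℝ) 1)
    (ν : Measure S) [IsProbabilityMeasure ν]
    (κ : ∀ n, Kernel (Fin n → S) S) [∀ n, IsMarkovKernel (κ n)]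
    (hκ : ∀ n (x : Fin n → S),
      κ n x = ENNReal.ofReal (q ^ n) • ν +
        ∑ i : Fin n, ENNReal.ofReal ((1 - q) * q ^ (n - 1 - (i : ℕ))) • Measure.dirac (x i))

include hq hκ in
lemma kernel_expand (k : ℕ) (z : Fin k → S) {A : Set S} (hA : MeasurableSet A) :
    κ k z A = (ENNReal.ofReal q) ^ k * ν A +
      ∑ j : Fin k, (ENNReal.ofReal (1 - q) * (ENNReal.ofReal q) ^ (k - 1 - (j : ℕ))) *
        A.indicator 1 (z j) := by
  rw [hκ k z]
  have h0 : (0:ℝ) ≤ q := hq.1.le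
  have h1 : (0:ℝ) ≤ 1 - q := by linarith [hq.2]
  simp only [Measure.coe_add, Measure.coe_finset_sum, Pi.add_apply, Finset.sum_apply,
    Measure.smul_apply, smul_eq_mul]
  rw [ENNReal.ofReal_pow h0]
  congr 1
  refine Finset.sum_congr rfl fun j _ => ?_
  rw [ENNReal.ofReal_mul h1, ENNReal.ofReal_pow h0, Measure.dirac_apply' _ hA]

include hq hκ in
lemma kernel_key (m : ℕ) (x : Fin m → S) {A : Set S} (hA : MeasurableSet A) :
    ∫⁻ y, κ (m+1) (Fin.snoc x y) A ∂(κ m x) = κ m x A := by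
  set Q := ENNReal.ofReal q with hQ
  set R := ENNReal.ofReal (1 - q) with hR
  have hQR : Q + R = 1 := by
    rw [hQ, hR, ← ENNReal.ofReal_add hq.1.le (by linarith [hq.2])]
    norm_num
  have hQtop : Q ≠ ⊤ := ENNReal.ofReal_ne_top
  have hRtop : R ≠ ⊤ := ENNReal.ofReal_ne_top
  have hexp : ∀ y, κ (m+1) (Fin.snoc x y) A =
      (Q ^ (m+1) * ν A + ∑ j : Fin m, (R * Q ^ (m - 1 - (j : ℕ)) * Q) * A.indicator 1 (x j))
        + R * A.indicator 1 y := by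
    intro y
    rw [kernel_expand q hq ν κ hκ (m+1) (Fin.snoc x y) hA, Fin.sum_univ_castSucc]
    simp only [Fin.snoc_castSucc, Fin.snoc_last, Fin.coe_castSucc, Fin.val_last]
    have hlast : m + 1 - 1 - m = 0 := by omega
    rw [hlast, pow_zero, mul_one, add_assoc]
    congr 2
    refine Finset.sum_congr rfl fun j _ => ?_
    have hj : m + 1 - 1 - (j : ℕ) = (m - 1 - (j : ℕ)) + 1 := by omega
    rw [hj, pow_succ]
    ring
  simp_rw [hexp]
  rw [lintegral_add_right _ ((measurable_one.indicator hA).const_mul _)]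
  · rw [lintegral_const, measure_univ, mul_one, lintegral_const_mul _ (measurable_one.indicator hA),
      lintegral_indicator_one hA]
    rw [kernel_expand q hq ν κ hκ m x hA]
    rw [mul_add, Finset.mul_sum]
    have hsum : ∀ j : Fin m, R * Q ^ (m - 1 - (j : ℕ)) * Q * A.indicator 1 (x j)
        + R * (R * Q ^ (m - 1 - (j : ℕ)) * A.indicator 1 (x j))
        = R * Q ^ (m - 1 - (j : ℕ)) * A.indicator 1 (x j) := by
      intro j
      have : R * Q ^ (m - 1 - (j : ℕ)) * Q * A.indicator 1 (x j)
          + R * (R * Q ^ (m - 1 - (j : ℕ)) * A.indicator 1 (x j))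
          = (Q + R) * (R * Q ^ (m - 1 - (j : ℕ)) * A.indicator 1 (x j)) := by ring
      rw [this, hQR, one_mul]
    have hν : Q ^ (m+1) * ν A + R * (Q ^ m * ν A) = Q ^ m * ν A := by
      have : Q ^ (m+1) * ν A + R * (Q ^ m * ν A) = (Q + R) * (Q ^ m * ν A) := by ring
      rw [this, hQR, one_mul]
    calc Q ^ (m+1) * ν A + ∑ j : Fin m, R * Q ^ (m - 1 - (j : ℕ)) * Q * A.indicator 1 (x j)
          + (R * (Q ^ m * ν A) + ∑ j : Fin m, R * (R * Q ^ (m - 1 - (j : ℕ)) * A.indicator 1 (x j)))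
        = (Q ^ (m+1) * ν A + R * (Q ^ m * ν A))
          + ∑ j : Fin m, (R * Q ^ (m - 1 - (j : ℕ)) * Q * A.indicator 1 (x j)
              + R * (R * Q ^ (m - 1 - (j : ℕ)) * A.indicator 1 (x j))) := by
          rw [Finset.sum_add_distrib]; ring
      _ = Q ^ m * ν A + ∑ j : Fin m, R * Q ^ (m - 1 - (j : ℕ)) * A.indicator 1 (x j) := by
          rw [hν]; congr 1; exact Finset.sum_congr rfl fun j _ => hsum j

end Key

section Law
variable (q : ℝ) (hq : q ∈ Set.Ioo (0 : ℝ) 1)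
    (ν : Measure S) [IsProbabilityMeasure ν]
    (κ : ∀ n, Kernel (Fin n → S) S) [∀ n, IsMarkovKernel (κ n)]
    (hκ : ∀ n (x : Fin n → S),
      κ n x = ENNReal.ofReal (q ^ n) • ν +
        ∑ i : Fin n, ENNReal.ofReal ((1 - q) * q ^ (n - 1 - (i : ℕ))) • Measure.dirac (x i))


include hq hκ in
lemma law_key (P : Measure (ℕ → S)) [IsProbabilityMeasure P] (hP : IsStrategyLaw κ P)
    (n : ℕ) {B : Set (Fin n → S)} (hB : MeasurableSet B) {A : Set S} (hA : MeasurableSet A)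
    (k : ℕ) :
    P ((fun ω (i : Fin n) => ω i) ⁻¹' B ∩ (fun ω => ω (n + k)) ⁻¹' A)
      = ∫⁻ x, B.indicator 1 x * κ n x A ∂stratFDD κ n := by
  have hrestr_meas : ∀ k : ℕ, Measurable (fun x : Fin (n+k) → S => fun i : Fin n =>
      x (Fin.castAdd k i)) := fun k => measurable_pi_iff.mpr fun i => measurable_pi_apply _
  have hG : ∀ m : ℕ, Measurable (fun ω : ℕ → S => fun i : Fin m => ω i) :=
    fun m => measurable_pi_iff.mpr fun i => measurable_pi_apply _
  set J : ℕ → ℝ≥0∞ := fun k =>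
    ∫⁻ x, B.indicator 1 (fun i : Fin n => x (Fin.castAdd k i)) * κ (n+k) x A
      ∂stratFDD κ (n+k) with hJ
  have hf_meas : ∀ k : ℕ, Measurable (fun x : Fin (n+k) → S =>
      B.indicator 1 (fun i : Fin n => x (Fin.castAdd k i)) * κ (n+k) x A) := fun k =>
    ((measurable_one.indicator hB).comp (hrestr_meas k)).mul (Kernel.measurable_coe _ hA)
  -- cast identity for snoc
  have hsnoc_restr : ∀ (k : ℕ) (x : Fin (n+k) → S) (y : S) (i : Fin n),
      (Fin.snoc x y : Fin (n+k+1) → S) (Fin.castAdd (k+1) i) = x (Fin.castAdd k i) := by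
    intro k x y i
    have : (Fin.castAdd (k+1) i : Fin (n+k+1)) = Fin.castSucc (Fin.castAdd k i) := by
      apply Fin.ext; rfl
    rw [this, Fin.snoc_castSucc]
  -- Step D
  have hD : ∀ k : ℕ, P ((fun ω (i : Fin n) => ω i) ⁻¹' B ∩ (fun ω => ω (n + k)) ⁻¹' A) = J k := by
    intro k
    set E : Set (Fin (n+k+1) → S) :=
      (fun y : Fin (n+k+1) → S => fun i : Fin n => y (Fin.castAdd (k+1) i)) ⁻¹' B ∩
      (fun y : Fin (n+k+1) → S => y (Fin.last (n+k))) ⁻¹' A with hEdef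
    have hEmeas : MeasurableSet E :=
      ((measurable_pi_iff.mpr fun i => measurable_pi_apply _) hB).inter
        ((measurable_pi_apply _) hA)
    have hev : (fun ω (i : Fin n) => ω i) ⁻¹' B ∩ (fun ω : ℕ → S => ω (n + k)) ⁻¹' A
        = (fun ω : ℕ → S => fun i : Fin (n+k+1) => ω i) ⁻¹' E := rfl
    rw [hev, ← Measure.map_apply (hG (n+k+1)) hEmeas, hP (n+k+1),
      stratFDD_succ_apply κ (n+k) hEmeas]
    refine lintegral_congr fun x => ?_
    have hpre : (fun y => (Fin.snoc x y : Fin (n+k+1) → S)) ⁻¹' E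
        = {y : S | (fun i : Fin n => x (Fin.castAdd k i)) ∈ B} ∩ A := by
      ext y
      simp only [hEdef, Set.mem_preimage, Set.mem_inter_iff, Set.mem_setOf_eq, Fin.snoc_last]
      constructor
      · rintro ⟨h1, h2⟩
        refine ⟨?_, h2⟩
        convert h1 using 2
        exact (hsnoc_restr k x y _).symm
      · rintro ⟨h1, h2⟩
        refine ⟨?_, h2⟩
        convert h1 using 2
        exact hsnoc_restr k x y _
    rw [hpre]
    by_cases hx : (fun i : Fin n => x (Fin.castAdd k i)) ∈ B
    · rw [Set.indicator_of_mem hx, Pi.one_apply, one_mul]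
      congr 1
      ext y; simp [hx]
    · rw [Set.indicator_of_notMem hx, zero_mul]
      have : {y : S | (fun i : Fin n => x (Fin.castAdd k i)) ∈ B} ∩ A = ∅ := by
        ext y; simp [hx]
      rw [this, measure_empty]
  -- Step E
  have hE : ∀ k : ℕ, J (k+1) = J k := by
    intro k
    have step1 : J (k+1) = ∫⁻ x, ∫⁻ y,
        B.indicator 1 (fun i : Fin n => (Fin.snoc x y : Fin (n+k+1) → S) (Fin.castAdd (k+1) i))
          * κ ((n+k)+1) (Fin.snoc x y) A ∂(κ (n+k) x) ∂stratFDD κ (n+k) :=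
      lintegral_stratFDD_succ κ (n+k) (hf_meas (k+1))
    rw [step1]
    refine lintegral_congr fun x => ?_
    have : ∀ y : S, B.indicator 1
          (fun i : Fin n => (Fin.snoc x y : Fin (n+k+1) → S) (Fin.castAdd (k+1) i))
        = B.indicator (1 : (Fin n → S) → ℝ≥0∞) (fun i : Fin n => x (Fin.castAdd k i)) := by
      intro y
      congr 1
      exact funext fun i => hsnoc_restr k x y i
    simp_rw [this]
    have hg : Measurable fun y : S => κ ((n+k)+1) (Fin.snoc x y) A :=
      (Kernel.measurable_coe _ hA).comp (measurable_snoc_left x)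
    rw [lintegral_const_mul _ hg, kernel_key q hq ν κ hκ (n+k) x hA]
  -- combine
  have hJ0 : ∀ k : ℕ, J k = J 0 := by
    intro k; induction k with
    | zero => rfl
    | succ k ih => rw [hE k, ih]
  rw [hD k, hJ0 k, hJ]
  refine lintegral_congr fun x => ?_
  have hx0 : (fun i : Fin n => x (Fin.castAdd 0 i)) = x := funext fun i => congrArg x (Fin.ext rfl)
  rw [hx0]
  rfl

end Law


/-- **Theorem (exponential smoothing is c.i.d.).** Fix `q ∈ (0, 1)` and a probability
measure `ν`, and let `κ` be the strategy
`σ_n(x) = qⁿ ν + (1 - q) ∑_{i=1}^n q^{n-i} δ_{x_i}` (in 0-based indexing the weight of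
`δ_{x_i}` is `(1 - q) q^{n-1-i}`). Then the coordinate process is c.i.d. under `P_κ`. -/
theorem exponentialSmoothing_cid {S : Type*} [MeasurableSpace S] [StandardBorelSpace S]
    [Nonempty S]
    (q : ℝ) (hq : q ∈ Set.Ioo (0 : ℝ) 1)
    (ν : Measure S) [IsProbabilityMeasure ν]
    (κ : ∀ n, Kernel (Fin n → S) S) [∀ n, IsMarkovKernel (κ n)]
    (hκ : ∀ n (x : Fin n → S),
      κ n x = ENNReal.ofReal (q ^ n) • ν +
        ∑ i : Fin n, ENNReal.ofReal ((1 - q) * q ^ (n - 1 - (i : ℕ))) • Measure.dirac (x i))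
    (P : Measure (ℕ → S)) [IsProbabilityMeasure P] (hP : IsStrategyLaw κ P) :
    CID P (fun n ω => ω n) := by

  have hG : ∀ m : ℕ, Measurable (fun ω : ℕ → S => fun i : Fin m => ω i) :=
    fun m => measurable_pi_iff.mpr fun i => measurable_pi_apply _
  -- marginals are ν
  have hmarg : ∀ (m : ℕ) (A : Set S), MeasurableSet A → P ((fun ω => ω m) ⁻¹' A) = ν A := by
    intro m A hA
    have h0 := law_key q hq ν κ hκ P hP 0 (MeasurableSet.univ (α := Fin 0 → S)) hA m
    simp only [Set.preimage_univ, Set.univ_inter, Nat.zero_add] at h0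
    rw [h0]
    have : stratFDD κ 0 = Measure.dirac (fun i : Fin 0 => i.elim0) := rfl
    rw [this, lintegral_dirac _ (fun x => Set.indicator Set.univ 1 x * κ 0 x A)]
    rw [hκ 0]
    simp
  constructor
  · ext A hA
    rw [Measure.map_apply (measurable_pi_apply 1) hA, Measure.map_apply (measurable_pi_apply 0) hA,
      hmarg 1 A hA, hmarg 0 A hA]
  · intro n m hn hnm A hA
    have hle : MeasurableSpace.comap (fun ω (i : Fin n) => ω i)
        (inferInstance : MeasurableSpace (Fin n → S)) ≤
        (inferInstance : MeasurableSpace (ℕ → S)) := (hG n).comap_le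
    have key : ∀ m' : ℕ, n ≤ m' →
        (fun ω : ℕ → S => (κ n (fun i : Fin n => ω i) A).toReal) =ᵐ[P]
          P[Set.indicator ((fun ω : ℕ → S => ω m') ⁻¹' A) (fun _ => (1 : ℝ)) |
            MeasurableSpace.comap (fun ω (i : Fin n) => ω i) inferInstance] := by
      intro m' hm'
      obtain ⟨k, rfl⟩ : ∃ k, m' = n + k := ⟨m' - n, by omega⟩
      have hfmeas : MeasurableSet ((fun ω : ℕ → S => ω (n + k)) ⁻¹' A) :=
        (measurable_pi_apply (n + k)) hA
      have hgmeas : Measurable (fun ω : ℕ → S => (κ n (fun i : Fin n => ω i) A).toReal) :=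
        ENNReal.measurable_toReal.comp ((Kernel.measurable_coe _ hA).comp (hG n))
      have hgle : ∀ ω : ℕ → S, ‖(κ n (fun i : Fin n => ω i) A).toReal‖ ≤ 1 := by
        intro ω
        rw [Real.norm_eq_abs, abs_of_nonneg ENNReal.toReal_nonneg]
        exact ENNReal.toReal_le_of_le_ofReal zero_le_one (by simpa using prob_le_one)
      have hgint : Integrable (fun ω : ℕ → S => (κ n (fun i : Fin n => ω i) A).toReal) P :=
        ⟨hgmeas.aestronglyMeasurable, HasFiniteIntegral.of_bounded (C := 1) (ae_of_all _ hgle)⟩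
      refine ae_eq_condExp_of_forall_setIntegral_eq hle
        ((integrable_const (1 : ℝ)).indicator hfmeas) (fun s _ _ => hgint.integrableOn) ?_ ?_
      · rintro s ⟨B, hB, rfl⟩ -
        -- RHS
        have hRHS : ∫ ω in (fun ω : ℕ → S => fun i : Fin n => ω i) ⁻¹' B,
            Set.indicator ((fun ω : ℕ → S => ω (n + k)) ⁻¹' A) (fun _ => (1 : ℝ)) ω ∂P
            = (P ((fun ω (i : Fin n) => ω i) ⁻¹' B ∩ (fun ω : ℕ → S => ω (n + k)) ⁻¹' A)).toReal := by
          rw [setIntegral_indicator hfmeas, setIntegral_const, smul_eq_mul, mul_one, measureReal_def]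
        have hLHS : ∫ ω in (fun ω : ℕ → S => fun i : Fin n => ω i) ⁻¹' B,
            (κ n (fun i : Fin n => ω i) A).toReal ∂P
            = (∫⁻ x, B.indicator 1 x * κ n x A ∂stratFDD κ n).toReal := by
          rw [← setIntegral_map hB
            (f := fun x : Fin n → S => (κ n x A).toReal)
            (ENNReal.measurable_toReal.comp (Kernel.measurable_coe _ hA)).aestronglyMeasurable
            (hG n).aemeasurable, hP n]
          rw [integral_toReal ((Kernel.measurable_coe _ hA).aemeasurable)
            (ae_of_all _ fun x => measure_lt_top _ _)]
          congr 1
          rw [← lintegral_indicator hB]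
          refine lintegral_congr fun x => ?_
          by_cases hx : x ∈ B <;> simp [hx]
        rw [hLHS, hRHS, law_key q hq ν κ hκ P hP n hB hA k]
      · have hGm : Measurable[MeasurableSpace.comap (fun ω (i : Fin n) => ω i) inferInstance]
            (fun ω : ℕ → S => fun i : Fin n => ω i) :=
          Measurable.of_comap_le le_rfl
        exact ((ENNReal.measurable_toReal.comp ((Kernel.measurable_coe _ hA).comp
          hGm)).stronglyMeasurable).aestronglyMeasurable
    exact (key m hnm).symm.trans (key n le_rfl)


end PredictiveBayes
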